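/- arXiv:2305.02371 — 5 statements merged into one kernel-verified Lean document; each statement's English description precedes it below -/
import Mathlib

section
/- Let W be an n×n matrix with nonnegative real entries and let r ≥ 0 be a real number such that every cycle of length ℓ in the weighted digraph of W has value at most r^ℓ. Then every closed walk of length m in the digraph of W has value at most r^m. -/
open Matrix BigOperators

/-- Spectral radius of a real square matrix: the supremum of the absolute values of the
complex eigenvalues (roots of the characteristic polynomial of the complexified matrix). -/
noncomputable def specRad {m : Type*} [Fintype m] [DecidableEq m] (W : Matrix m m ℝ) : ℝ :=
  sSup {r : ℝ | ∃ μ : ℂ, (Matrix.charpoly (W.map Complex.ofReal)).IsRoot μ ∧ r = ‖μ‖}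

/-- The principal submatrix of `W` obtained by deleting the rows and columns indexed by `S`. -/
def delSub {n : ℕ} (W : Matrix (Fin n) (Fin n) ℝ) (S : Finset (Fin n)) :
    Matrix {i : Fin n // i ∉ S} {i : Fin n // i ∉ S} ℝ :=
  W.submatrix Subtype.val Subtype.val

/-- A closed walk of length `m ≥ 1` in the weighted digraph of `W`. -/
def IsClosedWalk {n : ℕ} (W : Matrix (Fin n) (Fin n) ℝ) (m : ℕ) (v : ℕ → Fin n) : Prop :=
  1 ≤ m ∧ v 0 = v m ∧ ∀ i < m, 0 < W (v i) (v (i + 1))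

/-- A cycle: a closed walk whose first `m` vertices are pairwise distinct. -/
def IsCycle {n : ℕ} (W : Matrix (Fin n) (Fin n) ℝ) (m : ℕ) (v : ℕ → Fin n) : Prop :=
  IsClosedWalk W m v ∧ ∀ i < m, ∀ j < m, v i = v j → i = j

/-- The value of a walk: the product of the weights of its arcs. -/
noncomputable def walkValue {n : ℕ} (W : Matrix (Fin n) (Fin n) ℝ) (m : ℕ) (v : ℕ → Fin n) : ℝ :=
  ∏ i ∈ Finset.range m, W (v i) (v (i + 1))

/-- If every cycle of length `ℓ` has value at most `r ^ ℓ`, then every closed walk of length `m`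
has value at most `r ^ m`. -/
theorem closed_walk_value_le_of_cycle_bound {n : ℕ} (hn : 1 ≤ n)
    (W : Matrix (Fin n) (Fin n) ℝ) (hW : ∀ i j, 0 ≤ W i j) (r : ℝ) (hr : 0 ≤ r)
    (hcyc : ∀ (ℓ : ℕ) (c : ℕ → Fin n), IsCycle W ℓ c → walkValue W ℓ c ≤ r ^ ℓ)
    (m : ℕ) (v : ℕ → Fin n) (hv : IsClosedWalk W m v) :
    walkValue W m v ≤ r ^ m := by
  induction m using Nat.strong_induction_on generalizing v with
  | _ m ih =>
  obtain ⟨hm, hclose, harcs⟩ := hv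
  by_cases hdist : ∀ i < m, ∀ j < m, v i = v j → i = j
  · exact hcyc m v ⟨⟨hm, hclose, harcs⟩, hdist⟩
  · push_neg at hdist
    obtain ⟨i, hi, j, hj, heq, hne⟩ := hdist
    obtain ⟨a, b, hab, hb, hvab⟩ : ∃ a b, a < b ∧ b < m ∧ v a = v b := by
      rcases Nat.lt_or_gt_of_ne hne with h | h
      · exact ⟨i, j, h, hj, heq⟩
      · exact ⟨j, i, h, hi, heq.symm⟩
    set d := b - a with hd
    set e := m - b with he
    set c : ℕ → Fin n := fun k => v (a + k) with hc
    set v' : ℕ → Fin n := fun k => if k ≤ a then v k else v (k + d) with hv'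
    have hadb : a + d = b := by omega
    have hv'eq : ∀ k, a ≤ k → v' k = v (k + d) := by
      intro k hk
      rcases eq_or_lt_of_le hk with h | h
      · simp [hv', ← h, hvab, hadb]
      · simp [hv', Nat.not_le.mpr h]
    have hcwalk : IsClosedWalk W d c := by
      refine ⟨by omega, ?_, ?_⟩
      · simp [hc, hadb, hvab]
      · intro k hk
        have : a + (k + 1) = a + k + 1 := by omega
        simp only [hc, this]
        exact harcs (a + k) (by omega)
    have hv'walk : IsClosedWalk W (m - d) v' := by
      refine ⟨by omega, ?_, ?_⟩
      · have h1 : v' 0 = v 0 := by simp [hv']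
        have h2 : v' (m - d) = v m := by
          rw [hv'eq (m - d) (by omega)]; congr 1; omega
        rw [h1, h2, hclose]
      · intro k hk
        rcases Nat.lt_or_ge k a with h | h
        · have e1 : v' k = v k := by simp [hv', h.le]
          have e2 : v' (k + 1) = v (k + 1) := by simp [hv', Nat.succ_le_of_lt h]
          rw [e1, e2]; exact harcs k (by omega)
        · rw [hv'eq k h, hv'eq (k + 1) (by omega)]
          have : k + 1 + d = k + d + 1 := by omega
          rw [this]
          exact harcs (k + d) (by omega)
    have key : walkValue W m v = walkValue W d c * walkValue W (m - d) v' := by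
      have hme : m = a + (d + e) := by omega
      have hmd : m - d = a + e := by omega
      rw [walkValue, walkValue, walkValue, hmd, hme,
        Finset.prod_range_add, Finset.prod_range_add, Finset.prod_range_add]
      have f1 : ∀ k ∈ Finset.range a,
          W (v' k) (v' (k + 1)) = W (v k) (v (k + 1)) := by
        intro k hk
        simp only [Finset.mem_range] at hk
        have e1 : v' k = v k := by simp [hv', hk.le]
        have e2 : v' (k + 1) = v (k + 1) := by simp [hv', Nat.succ_le_of_lt hk]
        rw [e1, e2]
      have f2 : ∀ k ∈ Finset.range d,
          W (c k) (c (k + 1)) = W (v (a + k)) (v (a + k + 1)) := by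
        intro k _
        have : a + (k + 1) = a + k + 1 := by omega
        simp [hc, this]
      have f3 : ∀ k ∈ Finset.range e,
          W (v' (a + k)) (v' (a + k + 1)) = W (v (a + (d + k))) (v (a + (d + k) + 1)) := by
        intro k _
        rw [hv'eq (a + k) (by omega), hv'eq (a + k + 1) (by omega)]
        have e1 : a + k + d = a + (d + k) := by omega
        have e2 : a + k + 1 + d = a + (d + k) + 1 := by omega
        rw [e1, e2]
      rw [Finset.prod_congr rfl f1, Finset.prod_congr rfl f2, Finset.prod_congr rfl f3]
      ring
    have h1 := ih d (by omega) c hcwalk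
    have h2 := ih (m - d) (by omega) v' hv'walk
    have hnn : 0 ≤ walkValue W (m - d) v' :=
      Finset.prod_nonneg fun k _ => hW _ _
    calc walkValue W m v = walkValue W d c * walkValue W (m - d) v' := key
      _ ≤ r ^ d * r ^ (m - d) :=
          mul_le_mul h1 h2 hnn (pow_nonneg hr d)
      _ = r ^ m := by rw [← pow_add]; congr 1; omega
end

section
/- Let W be an n×n matrix with nonnegative real entries. For every cycle C of length m in the weighted digraph of W, the spectral radius of W is at least the m-th root of the value of C (the geometric mean value of C). In particular, ρ(W) is at least the geometric mean value of the dominant cycle. -/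
open Matrix BigOperators
open scoped ENNReal NNReal

attribute [local instance] Matrix.linftyOpNormedRing Matrix.linftyOpNormedAlgebra

lemma my_spec_iff {N : Type*} [Fintype N] [DecidableEq N] (A : Matrix N N ℂ) (μ : ℂ) :
    μ ∈ spectrum ℂ A ↔ A.charpoly.IsRoot μ := by
  have heval : A.charpoly.eval μ = (Matrix.scalar N μ - A).det := by
    rw [Matrix.charpoly, eval_det, matPolyEquiv_charmatrix]
    simp
  have halg : (algebraMap ℂ (Matrix N N ℂ)) μ = Matrix.scalar N μ := rfl
  rw [spectrum.mem_iff, Polynomial.IsRoot, heval, halg,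
    Matrix.isUnit_iff_isUnit_det, isUnit_iff_ne_zero, not_ne_iff]

lemma my_entry_nnnorm_le {N : Type*} [Fintype N] [DecidableEq N] (A : Matrix N N ℂ) (i j : N) :
    ‖A i j‖₊ ≤ ‖A‖₊ := by
  rw [Matrix.linfty_opNNNorm_def]
  exact le_trans (Finset.single_le_sum (f := fun j => ‖A i j‖₊) (fun _ _ => zero_le)
    (Finset.mem_univ j)) (Finset.le_sup (f := fun i => ∑ j, ‖A i j‖₊) (Finset.mem_univ i))

lemma my_pow_entry_nonneg {n : ℕ} (W : Matrix (Fin n) (Fin n) ℝ) (hW : ∀ i j, 0 ≤ W i j) :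
    ∀ (k : ℕ) (i j : Fin n), 0 ≤ (W ^ k) i j := by
  intro k
  induction k with
  | zero =>
    intro i j
    by_cases h : i = j <;> simp [pow_zero, Matrix.one_apply, h]
  | succ k ih =>
    intro i j
    rw [pow_succ, Matrix.mul_apply]
    exact Finset.sum_nonneg fun l _ => mul_nonneg (ih i l) (hW l j)

lemma my_entry_mul_le {n : ℕ} (A B : Matrix (Fin n) (Fin n) ℝ)
    (hA : ∀ i j, 0 ≤ A i j) (hB : ∀ i j, 0 ≤ B i j) (i l j : Fin n) :
    A i l * B l j ≤ (A * B) i j := by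
  rw [Matrix.mul_apply]
  exact Finset.single_le_sum (f := fun l' => A i l' * B l' j)
    (fun l' _ => mul_nonneg (hA i l') (hB l' j)) (Finset.mem_univ l)

lemma my_walk_le_pow {n : ℕ} (W : Matrix (Fin n) (Fin n) ℝ) (hW : ∀ i j, 0 ≤ W i j)
    (v : ℕ → Fin n) : ∀ t : ℕ,
    (∏ i ∈ Finset.range t, W (v i) (v (i + 1))) ≤ (W ^ t) (v 0) (v t) := by
  intro t
  induction t with
  | zero => simp [Matrix.one_apply]
  | succ t ih =>
    rw [Finset.prod_range_succ, pow_succ]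
    calc (∏ i ∈ Finset.range t, W (v i) (v (i + 1))) * W (v t) (v (t + 1))
        ≤ (W ^ t) (v 0) (v t) * W (v t) (v (t + 1)) := by
          apply mul_le_mul_of_nonneg_right ih (hW _ _)
      _ ≤ (W ^ t * W) (v 0) (v (t + 1)) :=
          my_entry_mul_le _ _ (my_pow_entry_nonneg W hW t) hW _ _ _

lemma my_cycle_pow_le {n : ℕ} (W : Matrix (Fin n) (Fin n) ℝ) (hW : ∀ i j, 0 ≤ W i j)
    {m : ℕ} {v : ℕ → Fin n} (hvm : v 0 = v m) :
    ∀ k : ℕ, (walkValue W m v) ^ (k + 1) ≤ (W ^ ((k + 1) * m)) (v 0) (v 0) := by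
  have hbase : walkValue W m v ≤ (W ^ m) (v 0) (v 0) := by
    rw [walkValue]
    calc (∏ i ∈ Finset.range m, W (v i) (v (i + 1))) ≤ (W ^ m) (v 0) (v m) :=
          my_walk_le_pow W hW v m
      _ = (W ^ m) (v 0) (v 0) := by rw [← hvm]
  have hVnn : 0 ≤ walkValue W m v :=
    Finset.prod_nonneg fun i _ => hW _ _
  intro k
  induction k with
  | zero => simpa using hbase
  | succ k ih =>
    have hWs : W ^ ((k + 1 + 1) * m) = W ^ ((k + 1) * m) * W ^ m := by
      rw [show (k + 1 + 1) * m = (k + 1) * m + m from by ring, pow_add]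
    have hVs : walkValue W m v ^ (k + 1 + 1) = walkValue W m v ^ (k + 1) * walkValue W m v :=
      pow_succ _ _
    rw [hWs, hVs]
    calc walkValue W m v ^ (k + 1) * walkValue W m v
        ≤ (W ^ ((k + 1) * m)) (v 0) (v 0) * (W ^ m) (v 0) (v 0) :=
          mul_le_mul ih hbase hVnn (my_pow_entry_nonneg W hW _ _ _)
      _ ≤ (W ^ ((k + 1) * m) * W ^ m) (v 0) (v 0) :=
          my_entry_mul_le _ _ (my_pow_entry_nonneg W hW _) (my_pow_entry_nonneg W hW _) _ _ _

/-- The spectral radius of a nonnegative matrix is at least the geometric mean value of every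
cycle of its weighted digraph; in particular it is at least the geometric mean value of the
dominant cycle. -/
theorem geom_mean_cycle_le_specRad {n : ℕ} (hn : 1 ≤ n) (W : Matrix (Fin n) (Fin n) ℝ)
    (hW : ∀ i j, 0 ≤ W i j) (m : ℕ) (v : ℕ → Fin n) (hv : IsCycle W m v) :
    (walkValue W m v) ^ ((1 : ℝ) / (m : ℝ)) ≤ specRad W := by
  obtain ⟨⟨hm, hvm, hpos⟩, -⟩ := hv
  haveI : Nonempty (Fin n) := Fin.pos_iff_nonempty.mp hn
  haveI : CompleteSpace (Matrix (Fin n) (Fin n) ℂ) :=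
    (by infer_instance)
  set A : Matrix (Fin n) (Fin n) ℂ := W.map Complex.ofReal with hA
  set V : ℝ := walkValue W m v with hV
  have hVpos : 0 < V := Finset.prod_pos fun i hi => hpos i (Finset.mem_range.mp hi)
  have hmR : (0:ℝ) < (m:ℝ) := by exact_mod_cast hm
  -- A ^ N is the complexification of W ^ N
  have hApow : ∀ N : ℕ, A ^ N = (W ^ N).map Complex.ofReal := by
    intro N
    have : A = Complex.ofRealHom.mapMatrix W := rfl
    rw [this, ← map_pow, RingHom.mapMatrix_apply]
    rfl
  -- key norm lower bound on subsequence
  have hkey : ∀ k : ℕ,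
      (ENNReal.ofReal V) ^ ((1:ℝ)/(m:ℝ)) ≤
        (‖A ^ ((k + 1) * m)‖₊ : ℝ≥0∞) ^ ((1:ℝ) / (((k + 1) * m : ℕ) : ℝ)) := by
    intro k
    set N := (k + 1) * m with hN
    have hNpos : (0:ℝ) < (N:ℕ) := by
      have : 1 ≤ N := Nat.one_le_iff_ne_zero.mpr (by positivity)
      exact_mod_cast this
    have h1 : V ^ (k + 1) ≤ (W ^ N) (v 0) (v 0) := my_cycle_pow_le W hW hvm k
    have h2 : (ENNReal.ofReal V) ^ (k + 1) ≤ (‖A ^ N‖₊ : ℝ≥0∞) := by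
      calc (ENNReal.ofReal V) ^ (k + 1) = ENNReal.ofReal (V ^ (k + 1)) := by
            rw [ENNReal.ofReal_pow hVpos.le]
        _ ≤ ENNReal.ofReal ((W ^ N) (v 0) (v 0)) := ENNReal.ofReal_le_ofReal h1
        _ = (‖(A ^ N) (v 0) (v 0)‖₊ : ℝ≥0∞) := by
            rw [hApow N]
            rw [Matrix.map_apply]
            rw [← Real.enorm_eq_ofReal (my_pow_entry_nonneg W hW N _ _)]
            norm_cast
        _ ≤ (‖A ^ N‖₊ : ℝ≥0∞) := by exact_mod_cast my_entry_nnnorm_le (A ^ N) (v 0) (v 0)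
    have h3 := ENNReal.rpow_le_rpow h2 (by positivity : (0:ℝ) ≤ 1 / ((N:ℕ):ℝ))
    calc (ENNReal.ofReal V) ^ ((1:ℝ)/(m:ℝ))
        = ((ENNReal.ofReal V) ^ (k + 1)) ^ ((1:ℝ) / ((N:ℕ):ℝ)) := by
          rw [← ENNReal.rpow_natCast (ENNReal.ofReal V) (k+1), ← ENNReal.rpow_mul]
          congr 1
          have hNc : ((N:ℕ):ℝ) = ((k:ℝ) + 1) * (m:ℝ) := by
            rw [hN]; push_cast; ring
          rw [hNc]
          push_cast
          field_simp
      _ ≤ _ := h3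
  -- Gelfand's formula along the subsequence
  have htend := spectrum.pow_nnnorm_pow_one_div_tendsto_nhds_spectralRadius A
  have hmono : Filter.Tendsto (fun k : ℕ => (k + 1) * m) Filter.atTop Filter.atTop := by
    apply Filter.tendsto_atTop_mono (f := id) (fun k => ?_) Filter.tendsto_id
    calc (k : ℕ) ≤ k + 1 := Nat.le_succ k
      _ ≤ (k + 1) * m := Nat.le_mul_of_pos_right _ hm
  have hsub := htend.comp hmono
  have hrad : (ENNReal.ofReal V) ^ ((1:ℝ)/(m:ℝ)) ≤ spectralRadius ℂ A :=
    ge_of_tendsto hsub (Filter.Eventually.of_forall hkey)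
  -- bound the spectral radius by specRad
  set S : Set ℝ := {r : ℝ | ∃ μ : ℂ, (Matrix.charpoly (W.map Complex.ofReal)).IsRoot μ ∧
    r = ‖μ‖} with hS
  have hBdd : BddAbove S := by
    have hfin : S.Finite := by
      have hne : (Matrix.charpoly A) ≠ 0 := (Matrix.charpoly_monic A).ne_zero
      have : S ⊆ (fun μ : ℂ => ‖μ‖) '' {μ : ℂ | (Matrix.charpoly A).IsRoot μ} := by
        rintro r ⟨μ, hr, rfl⟩
        exact ⟨μ, hr, rfl⟩
      exact Set.Finite.subset (Set.Finite.image _ (Polynomial.finite_setOf_isRoot hne)) this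
    exact hfin.bddAbove
  have hSnonneg : 0 ≤ specRad W := by
    apply Real.sSup_nonneg
    rintro x ⟨μ, -, rfl⟩
    exact norm_nonneg _
  have hspec : spectralRadius ℂ A ≤ ENNReal.ofReal (specRad W) := by
    rw [spectralRadius]
    refine iSup₂_le fun μ hμ => ?_
    have hroot : (Matrix.charpoly A).IsRoot μ := (my_spec_iff A μ).mp hμ
    have hmem : ‖μ‖ ∈ S := ⟨μ, hroot, rfl⟩
    have hle : ‖μ‖ ≤ specRad W := le_csSup hBdd hmem
    calc (‖μ‖₊ : ℝ≥0∞) = ENNReal.ofReal (‖μ‖) := by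
          rw [← Real.enorm_eq_ofReal (norm_nonneg _)]
          norm_cast
          simp [enorm_eq_nnnorm]
      _ ≤ ENNReal.ofReal (specRad W) := ENNReal.ofReal_le_ofReal hle
  have hfinal : ENNReal.ofReal (V ^ ((1:ℝ)/(m:ℝ))) ≤ ENNReal.ofReal (specRad W) := by
    rw [← ENNReal.ofReal_rpow_of_pos hVpos]
    exact hrad.trans hspec
  exact (ENNReal.ofReal_le_ofReal_iff hSnonneg).mp hfinal
end

section
/- Let W be an n×n matrix with nonnegative real entries and let r ≥ 0 be a real number such that every cycle of length ℓ in the weighted digraph of W has value at most r^ℓ. Then the spectral radius of W satisfies ρ(W) ≤ n·r. (Thus, up to the factor n, the spectral radius is controlled by the geometric mean value of the dominant cycle.) -/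
open Matrix BigOperators

/-- A root of the characteristic polynomial has an eigenvector. -/
lemma aux_eigvec {n : ℕ} (A : Matrix (Fin n) (Fin n) ℂ) (μ : ℂ) (h : A.charpoly.IsRoot μ) :
    ∃ x : Fin n → ℂ, x ≠ 0 ∧ A.mulVec x = μ • x := by
  have hdet : (scalar (Fin n) μ - A).det = 0 := by
    have := h
    rw [Polynomial.IsRoot, Matrix.charpoly, eval_det, matPolyEquiv_charmatrix] at this
    simpa using this
  obtain ⟨x, hx0, hx⟩ := (Matrix.exists_mulVec_eq_zero_iff).2 hdet
  refine ⟨x, hx0, ?_⟩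
  rw [Matrix.sub_mulVec] at hx
  have h2 : (scalar (Fin n) μ).mulVec x = μ • x := by
    ext i
    simp [Matrix.scalar, Matrix.mulVec_diagonal]
  rw [h2] at hx
  exact (sub_eq_zero.1 hx).symm

lemma aux_pow_nonneg {n : ℕ} (W : Matrix (Fin n) (Fin n) ℝ) (hW : ∀ i j, 0 ≤ W i j)
    (m : ℕ) : ∀ i j, 0 ≤ (W ^ m) i j := by
  induction m with
  | zero => intro i j; by_cases h : i = j <;> simp [h, Matrix.one_apply]
  | succ m ih =>
    intro i j
    rw [pow_succ, Matrix.mul_apply]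
    exact Finset.sum_nonneg fun k _ => mul_nonneg (ih i k) (hW k j)

/-- Eigenvalue power bound via the total sum of the entries of `W ^ m`. -/
lemma aux_eig_bound {n : ℕ} (hn : 1 ≤ n) (W : Matrix (Fin n) (Fin n) ℝ) (hW : ∀ i j, 0 ≤ W i j)
    (μ : ℂ) (x : Fin n → ℂ) (hx0 : x ≠ 0)
    (hx : (W.map Complex.ofReal).mulVec x = μ • x) (m : ℕ) :
    ‖μ‖ ^ m ≤ ∑ i, ∑ j, (W ^ m) i j := by
  have hmap : ∀ k : ℕ, (W.map Complex.ofReal) ^ k = (W ^ k).map Complex.ofReal := by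
    intro k
    have : W.map Complex.ofReal
        = (Complex.ofRealHom.mapMatrix : Matrix (Fin n) (Fin n) ℝ →+* _) W := rfl
    rw [this, ← map_pow]; rfl
  have hxm : ((W ^ m).map Complex.ofReal).mulVec x = μ ^ m • x := by
    rw [← hmap]
    induction m with
    | zero => simp
    | succ m ih =>
      rw [pow_succ, ← Matrix.mulVec_mulVec, hx, Matrix.mulVec_smul, ih, smul_smul, ← pow_succ']
  obtain ⟨i, _, hi⟩ := Finset.exists_max_image (Finset.univ : Finset (Fin n))
    (fun j => ‖x j‖) (Finset.univ_nonempty_iff.2 ⟨⟨0, hn⟩⟩)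
  have hxi : 0 < ‖x i‖ := by
    obtain ⟨j, hj⟩ := Function.ne_iff.1 hx0
    calc 0 < ‖x j‖ := by simpa using hj
    _ ≤ ‖x i‖ := hi j (Finset.mem_univ j)
  have hcomp : μ ^ m * x i = ∑ j, ((W ^ m) i j : ℂ) * x j := by
    have := congrFun hxm i
    rw [Matrix.mulVec, dotProduct] at this
    simpa [Matrix.map_apply, mul_comm] using this.symm
  have habs : ‖μ‖ ^ m * ‖x i‖
      ≤ (∑ j, (W ^ m) i j) * ‖x i‖ := by
    calc ‖μ‖ ^ m * ‖x i‖ = ‖μ ^ m * x i‖ := by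
          rw [norm_mul, norm_pow]
    _ = ‖∑ j, ((W ^ m) i j : ℂ) * x j‖ := by rw [hcomp]
    _ ≤ ∑ j, ‖((W ^ m) i j : ℂ) * x j‖ := norm_sum_le _ _
    _ ≤ ∑ j, (W ^ m) i j * ‖x i‖ := by
          apply Finset.sum_le_sum
          intro j _
          rw [norm_mul, Complex.norm_real, Real.norm_of_nonneg (aux_pow_nonneg W hW m i j)]
          exact mul_le_mul_of_nonneg_left (hi j (Finset.mem_univ j)) (aux_pow_nonneg W hW m i j)
    _ = (∑ j, (W ^ m) i j) * ‖x i‖ := by rw [Finset.sum_mul]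
  have h1 : ‖μ‖ ^ m ≤ ∑ j, (W ^ m) i j := le_of_mul_le_mul_right habs hxi
  refine h1.trans ?_
  apply Finset.single_le_sum (f := fun i => ∑ j, (W ^ m) i j) ?_ (Finset.mem_univ i)
  intro k _
  exact Finset.sum_nonneg fun j _ => aux_pow_nonneg W hW m k j

/-- The weighted sum of entries of `W ^ m` as a sum over walks. -/
lemma aux_sum_walks {n : ℕ} (W : Matrix (Fin n) (Fin n) ℝ) :
    ∀ (m : ℕ) (f : Fin n → ℝ),
      ∑ i, ∑ k, (W ^ m) i k * f k =
      ∑ v : Fin (m + 1) → Fin n,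
        (∏ k : Fin m, W (v k.castSucc) (v k.succ)) * f (v (Fin.last m)) := by
  intro m
  induction m with
  | zero =>
    intro f
    simp [Matrix.one_apply]
    rw [← (Equiv.funUnique (Fin 1) (Fin n)).symm.sum_comp]
    simp
  | succ m ih =>
    intro f
    have lhs : ∑ i, ∑ k, (W ^ (m+1)) i k * f k
        = ∑ i, ∑ l, (W ^ m) i l * (∑ k, W l k * f k) := by
      apply Finset.sum_congr rfl
      intro i _
      rw [pow_succ]
      simp only [Matrix.mul_apply, Finset.sum_mul, Finset.mul_sum]
      rw [Finset.sum_comm]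
      exact Finset.sum_congr rfl fun l _ => Finset.sum_congr rfl fun k _ => by ring
    rw [lhs, ih (fun l => ∑ k, W l k * f k)]
    rw [← (Fin.snocEquiv (fun _ : Fin (m+2) => Fin n)).sum_comp]
    rw [Fintype.sum_prod_type]
    rw [Finset.sum_comm]
    apply Finset.sum_congr rfl
    intro v _
    rw [Finset.mul_sum]
    apply Finset.sum_congr rfl
    intro a _
    simp only [Fin.snocEquiv_apply]
    rw [Fin.prod_univ_castSucc (f := fun k : Fin (m+1) =>
      W ((Fin.snoc v a : Fin (m+2) → Fin n) k.castSucc)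
        ((Fin.snoc v a : Fin (m+2) → Fin n) k.succ))]
    simp only [Fin.succ_castSucc, Fin.snoc_castSucc, Fin.snoc_last, Fin.succ_last]
    ring

/-- The key combinatorial bound on walk values, by repeated removal of cycles. -/
lemma aux_walk_bound {n : ℕ} (W : Matrix (Fin n) (Fin n) ℝ)
    (hW : ∀ i j, 0 ≤ W i j) (r : ℝ) (hr : 0 ≤ r)
    (hcyc : ∀ (ℓ : ℕ) (c : ℕ → Fin n), IsCycle W ℓ c → walkValue W ℓ c ≤ r ^ ℓ)
    (B : ℝ) (hB : ∀ i j, W i j ≤ B) (hrB : r ≤ B) (hB0 : 0 ≤ B) :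
    ∀ (m : ℕ) (v : ℕ → Fin n), walkValue W m v ≤ B ^ (min m n) * r ^ (m - min m n) := by
  intro m
  induction m using Nat.strong_induction_on with
  | _ m IH =>
  intro v
  classical
  by_cases hm : m ≤ n
  · rw [min_eq_left hm, Nat.sub_self, pow_zero, mul_one]
    calc walkValue W m v ≤ ∏ _i ∈ Finset.range m, B :=
          Finset.prod_le_prod (fun i _ => hW _ _) (fun i _ => hB _ _)
    _ = B ^ m := by rw [Finset.prod_const, Finset.card_range]
  · push_neg at hm
    have hmin : min m n = n := min_eq_right hm.le
    rw [hmin]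
    by_cases hpos : ∀ i < m, 0 < W (v i) (v (i + 1))
    · -- pigeonhole among v 0 .. v n
      have hcard : Fintype.card (Fin n) < Fintype.card (Fin (n + 1)) := by simp
      obtain ⟨x, y, hxy, hvxy⟩ :=
        Fintype.exists_ne_map_eq_of_card_lt (fun k : Fin (n + 1) => v k) hcard
      have hQ : ∃ b : ℕ, b ≤ n ∧ ∃ a, a < b ∧ v a = v b := by
        rcases lt_or_gt_of_ne hxy with h | h
        · exact ⟨y, by omega, x, by exact_mod_cast h, hvxy⟩
        · exact ⟨x, by omega, y, by exact_mod_cast h, hvxy.symm⟩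
      set b := Nat.find hQ with hbdef
      obtain ⟨hbn, a, hab, hvab⟩ := Nat.find_spec hQ
      have hmin' : ∀ j < b, ¬ ∃ i, i < j ∧ v i = v j := by
        intro j hj hex
        exact Nat.find_min hQ hj ⟨by omega, hex⟩
      set ℓ := b - a with hldef
      have hl1 : 1 ≤ ℓ := by omega
      have hln : ℓ ≤ n := by omega
      have hblt : b < m := by omega
      have hcycle : IsCycle W ℓ (fun k => v (a + k)) := by
        refine ⟨⟨hl1, ?_, ?_⟩, ?_⟩
        · simp only [Nat.add_zero]
          have : a + ℓ = b := by omega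
          rw [this, hvab]
        · intro i hi
          have h1 : a + i < m := by omega
          exact hpos (a + i) h1
        · intro i hi j hj hvij
          by_contra hne
          rcases Nat.lt_or_ge i j with h | h
          · exact hmin' (a + j) (by omega) ⟨a + i, by omega, hvij⟩
          · have h' : j < i := by omega
            exact hmin' (a + i) (by omega) ⟨a + j, by omega, hvij.symm⟩
      have hcval : (∏ k ∈ Finset.range ℓ, W (v (a + k)) (v (a + k + 1))) ≤ r ^ ℓ := by
        have := hcyc ℓ (fun k => v (a + k)) hcycle
        unfold walkValue at this
        convert this using 2
        rfl
      set v' : ℕ → Fin n := fun i => if i < a then v i else v (i + ℓ) with hv'def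
      have hvb : v b = v a := hvab.symm
      have hfactors : ∀ i < m - ℓ, W (v' i) (v' (i + 1)) =
          if i < a then W (v i) (v (i + 1)) else W (v (i + ℓ)) (v (i + ℓ + 1)) := by
        intro i hi
        by_cases h : i < a
        · simp only [if_pos h]
          have h1 : v' i = v i := if_pos h
          have h2 : v' (i + 1) = v (i + 1) := by
            by_cases h' : i + 1 < a
            · exact if_pos h'
            · have he : i + 1 = a := by omega
              have hb' : i + 1 + ℓ = b := by omega
              calc v' (i + 1) = v (i + 1 + ℓ) := if_neg (by omega)
                _ = v b := by rw [hb']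
                _ = v (i + 1) := by rw [hvb, he]
          rw [h1, h2]
        · simp only [if_neg h]
          have h1 : v' i = v (i + ℓ) := if_neg h
          have h2 : v' (i + 1) = v (i + 1 + ℓ) := if_neg (by omega)
          rw [h1, h2]
          congr 2
          omega
      have hsplit : walkValue W m v =
          (∏ i ∈ Finset.range a, W (v i) (v (i + 1))) *
          (∏ k ∈ Finset.range ℓ, W (v (a + k)) (v (a + k + 1))) *
          (∏ i ∈ Finset.Ico b m, W (v i) (v (i + 1))) := by
        unfold walkValue
        rw [← Finset.prod_range_mul_prod_Ico _ hblt.le,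
            ← Finset.prod_range_mul_prod_Ico _ (by omega : a ≤ b),
            Finset.prod_Ico_eq_prod_range, hldef]
      have hshort : walkValue W (m - ℓ) v' =
          (∏ i ∈ Finset.range a, W (v i) (v (i + 1))) *
          (∏ i ∈ Finset.Ico b m, W (v i) (v (i + 1))) := by
        unfold walkValue
        rw [← Finset.prod_range_mul_prod_Ico _ (by omega : a ≤ m - ℓ)]
        congr 1
        · apply Finset.prod_congr rfl
          intro i hi
          rw [Finset.mem_range] at hi
          rw [hfactors i (by omega), if_pos hi]
        · rw [Finset.prod_Ico_eq_prod_range, Finset.prod_Ico_eq_prod_range]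
          have hc : m - ℓ - a = m - b := by omega
          rw [hc]
          apply Finset.prod_congr rfl
          intro k hk
          rw [Finset.mem_range] at hk
          rw [hfactors (a + k) (by omega), if_neg (by omega)]
          congr 2 <;> omega
      have key : walkValue W m v =
          (∏ k ∈ Finset.range ℓ, W (v (a + k)) (v (a + k + 1))) * walkValue W (m - ℓ) v' := by
        rw [hsplit, hshort]; ring
      have hwnn : 0 ≤ walkValue W (m - ℓ) v' :=
        Finset.prod_nonneg fun i _ => hW _ _
      have hIH := IH (m - ℓ) (by omega) v'
      set t := min (m - ℓ) n with htdef
      have ht1 : t ≤ m - ℓ := min_le_left _ _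
      have ht2 : t ≤ n := min_le_right _ _
      have step1 : walkValue W m v ≤ r ^ ℓ * (B ^ t * r ^ (m - ℓ - t)) := by
        rw [key]
        exact mul_le_mul hcval hIH hwnn (pow_nonneg hr ℓ)
      refine step1.trans ?_
      have e0 : ℓ + (m - ℓ - t) = (n - t) + (m - n) := by omega
      calc r ^ ℓ * (B ^ t * r ^ (m - ℓ - t))
          = B ^ t * (r ^ (ℓ + (m - ℓ - t))) := by rw [pow_add]; ring
        _ = B ^ t * (r ^ (n - t) * r ^ (m - n)) := by rw [e0, pow_add]
        _ ≤ B ^ t * (B ^ (n - t) * r ^ (m - n)) := by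
            apply mul_le_mul_of_nonneg_left _ (pow_nonneg hB0 t)
            exact mul_le_mul_of_nonneg_right (pow_le_pow_left₀ hr hrB _) (pow_nonneg hr _)
        _ = B ^ n * r ^ (m - n) := by rw [← mul_assoc, ← pow_add]; congr 2; omega
    · push_neg at hpos
      obtain ⟨i, him, hi0⟩ := hpos
      have hz : W (v i) (v (i + 1)) = 0 := le_antisymm hi0 (hW _ _)
      have : walkValue W m v = 0 :=
        Finset.prod_eq_zero (Finset.mem_range.2 him) hz
      rw [this]
      exact mul_nonneg (pow_nonneg hB0 _) (pow_nonneg hr _)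

/-- If every cycle of length `ℓ` of the digraph of the nonnegative matrix `W` has value at most
`r ^ ℓ`, then `ρ(W) ≤ n * r`. -/
theorem specRad_le_of_cycle_bound {n : ℕ} (hn : 1 ≤ n) (W : Matrix (Fin n) (Fin n) ℝ)
    (hW : ∀ i j, 0 ≤ W i j) (r : ℝ) (hr : 0 ≤ r)
    (hcyc : ∀ (ℓ : ℕ) (c : ℕ → Fin n), IsCycle W ℓ c → walkValue W ℓ c ≤ r ^ ℓ) :
    specRad W ≤ n * r := by
  have hnr0 : (0:ℝ) ≤ n * r := mul_nonneg (Nat.cast_nonneg n) hr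
  apply Real.sSup_le _ hnr0
  rintro ρ ⟨μ, hroot, rfl⟩
  -- set up the bound constant
  set B : ℝ := max r (∑ i, ∑ j, W i j) with hBdef
  have hB0 : 0 ≤ B := le_trans hr (le_max_left _ _)
  have hrB : r ≤ B := le_max_left _ _
  have hB : ∀ i j, W i j ≤ B := by
    intro i j
    refine le_trans ?_ (le_max_right _ _)
    calc W i j ≤ ∑ j', W i j' :=
          Finset.single_le_sum (fun k _ => hW i k) (Finset.mem_univ j)
    _ ≤ ∑ i', ∑ j', W i' j' :=
          Finset.single_le_sum (f := fun i' => ∑ j', W i' j')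
            (fun k _ => Finset.sum_nonneg fun l _ => hW k l) (Finset.mem_univ i)
  obtain ⟨x, hx0, hx⟩ := aux_eigvec (W.map Complex.ofReal) μ hroot
  -- the master inequality
  have master : ∀ m : ℕ, ‖μ‖ ^ m
      ≤ (n:ℝ) ^ (m + 1) * (B ^ (min m n) * r ^ (m - min m n)) := by
    intro m
    refine (aux_eig_bound hn W hW μ x hx0 hx m).trans ?_
    have h1 : ∑ i, ∑ j, (W ^ m) i j = ∑ i, ∑ j, (W ^ m) i j * (fun _ : Fin n => (1:ℝ)) j := by
      simp
    rw [h1, aux_sum_walks W m (fun _ => (1:ℝ))]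
    have h2 : ∀ v : Fin (m + 1) → Fin n,
        (∏ k : Fin m, W (v k.castSucc) (v k.succ)) * (1:ℝ)
          ≤ B ^ (min m n) * r ^ (m - min m n) := by
      intro v
      rw [mul_one]
      have hext : (∏ k : Fin m, W (v k.castSucc) (v k.succ))
          = walkValue W m (fun i => v ⟨min i m, by omega⟩) := by
        unfold walkValue
        rw [← Fin.prod_univ_eq_prod_range
          (fun i => W ((fun i : ℕ => v ⟨min i m, by omega⟩) i)
            ((fun i : ℕ => v ⟨min i m, by omega⟩) (i + 1)))]
        apply Finset.prod_congr rfl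
        intro k _
        have hk := k.isLt
        have e1 : (⟨min (↑k) m, by omega⟩ : Fin (m+1)) = k.castSucc := by
          apply Fin.ext
          simp only [Fin.coe_castSucc]
          omega
        have e2 : (⟨min (↑k + 1) m, by omega⟩ : Fin (m+1)) = k.succ := by
          apply Fin.ext
          simp only [Fin.val_succ]
          omega
        exact congrArg₂ (fun p q => W (v p) (v q)) e1.symm e2.symm
      rw [hext]
      exact aux_walk_bound W hW r hr hcyc B hB hrB hB0 m _
    calc ∑ v : Fin (m + 1) → Fin n,
          (∏ k : Fin m, W (v k.castSucc) (v k.succ)) * (fun _ : Fin n => (1:ℝ)) (v (Fin.last m))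
        ≤ ∑ _v : Fin (m + 1) → Fin n, B ^ (min m n) * r ^ (m - min m n) :=
          Finset.sum_le_sum fun v _ => h2 v
      _ = (Fintype.card (Fin (m + 1) → Fin n) : ℝ) * (B ^ (min m n) * r ^ (m - min m n)) := by
          rw [Finset.sum_const, Finset.card_univ, nsmul_eq_mul]
      _ = (n:ℝ) ^ (m + 1) * (B ^ (min m n) * r ^ (m - min m n)) := by
          rw [Fintype.card_fun]
          simp
  -- conclude
  rcases eq_or_lt_of_le hr with hr0 | hrpos
  · -- r = 0
    have h := master (n + 1)
    rw [← hr0] at h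
    have hminn : min (n + 1) n = n := by omega
    rw [hminn] at h
    have : (n + 1) - n = 1 := by omega
    rw [this] at h
    simp only [pow_one, mul_zero] at h
    have habs0 : ‖μ‖ ^ (n + 1) = 0 :=
      le_antisymm h (pow_nonneg (norm_nonneg μ) _)
    have : ‖μ‖ = 0 := by
      exact pow_eq_zero_iff (by omega) |>.1 habs0
    rw [this, ← hr0, mul_zero]
  · -- r > 0
    by_contra hgt
    push_neg at hgt
    have hnr : (0:ℝ) < n * r := by
      apply mul_pos _ hrpos
      exact_mod_cast hn
    set q : ℝ := ‖μ‖ / (n * r) with hqdef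
    have hq1 : 1 < q := (one_lt_div hnr).2 hgt
    set K : ℝ := n * B ^ n / r ^ n with hKdef
    have hqm : ∀ m : ℕ, n ≤ m → q ^ m ≤ K := by
      intro m hnm
      have h := master m
      have hminn : min m n = n := min_eq_right hnm
      rw [hminn] at h
      have hfac : (n:ℝ) ^ (m + 1) * (B ^ n * r ^ (m - n)) = (n * r) ^ m * K := by
        have hrm : r ^ (m - n) = r ^ m / r ^ n := by
          rw [eq_div_iff (pow_ne_zero n (ne_of_gt hrpos)), ← pow_add]
          congr 1; omega
        rw [hKdef, hrm, mul_pow, pow_succ]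
        field_simp
      rw [hfac] at h
      have hpow : (0:ℝ) < (n * r) ^ m := pow_pos hnr m
      rw [hqdef, div_pow, div_le_iff₀ hpow]
      calc ‖μ‖ ^ m ≤ (n * r) ^ m * K := h
        _ = K * (n * r) ^ m := by ring
    obtain ⟨m0, hm0⟩ := pow_unbounded_of_one_lt K hq1
    have hm : q ^ m0 ≤ q ^ (max m0 n) :=
      pow_le_pow_right₀ hq1.le (le_max_left _ _)
    have := hqm (max m0 n) (le_max_right _ _)
    linarith
end

section
/- Let n ≥ 2 and let W be the n×n nonnegative matrix of a weighted Hamiltonian cycle: W i j = w_i > 0 when j = i+1 (mod n) and W i j = 0 otherwise. Then ρ(W) = (w_0 · w_1 ⋯ w_{n−1})^{1/n}; for every vertex s, the principal submatrix W({s}) obtained by deleting row and column s satisfies ρ(W({s})) = 0, so the spectral influence of every vertex is 𝒮({s}) = 1 and the spectral cyclicality is 𝐒 = n. -/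
open Matrix BigOperators

lemma aux_scalar_mulVec {m : Type*} [Fintype m] [DecidableEq m] (μ : ℂ) (v : m → ℂ) :
    (Matrix.scalar m μ).mulVec v = μ • v := by
  ext i
  simp [Matrix.scalar, Matrix.mulVec_diagonal]

/-- A complex number is a root of the characteristic polynomial iff it is an eigenvalue. -/
lemma aux_charpoly_isRoot_iff {m : Type*} [Fintype m] [DecidableEq m] (A : Matrix m m ℂ)
    (μ : ℂ) : A.charpoly.IsRoot μ ↔ ∃ v : m → ℂ, v ≠ 0 ∧ A.mulVec v = μ • v := by
  rw [Polynomial.IsRoot, Matrix.charpoly, eval_det, Matrix.matPolyEquiv_charmatrix,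
    Polynomial.eval_sub, Polynomial.eval_X, Polynomial.eval_C,
    ← Matrix.exists_mulVec_eq_zero_iff]
  constructor
  · rintro ⟨v, hv, h⟩
    refine ⟨v, hv, ?_⟩
    rw [Matrix.sub_mulVec, aux_scalar_mulVec, sub_eq_zero] at h
    exact h.symm
  · rintro ⟨v, hv, h⟩
    exact ⟨v, hv, by rw [Matrix.sub_mulVec, aux_scalar_mulVec, h, sub_self]⟩

/-- Over `ℂ` the characteristic polynomial of a nonempty matrix always has a root. -/
lemma aux_charpoly_has_root {m : Type*} [Fintype m] [DecidableEq m] [Nonempty m]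
    (A : Matrix m m ℂ) : ∃ μ : ℂ, A.charpoly.IsRoot μ := by
  have hdeg : 0 < A.charpoly.degree := by
    rw [Matrix.charpoly_degree_eq_dim]
    exact_mod_cast Fintype.card_pos
  exact Complex.exists_root hdeg

open Fin.NatCast Fin.CommRing

/-- A weighted Hamiltonian cycle: the spectral radius is the geometric mean of the weights,
every vertex has spectral influence `1`, and the spectral cyclicality is `n`. -/
theorem hamiltonian_cycle_cyclicality {n : ℕ} (hn : 2 ≤ n) (w : Fin n → ℝ)
    (hw : ∀ i, 0 < w i) (W : Matrix (Fin n) (Fin n) ℝ)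
    (hWdef : ∀ i j : Fin n, W i j = if (j : ℕ) = ((i : ℕ) + 1) % n then w i else 0) :
    specRad W = (∏ i, w i) ^ ((1 : ℝ) / (n : ℝ)) ∧
    (∀ s : Fin n, specRad (delSub W {s}) = 0) ∧
    (∀ s : Fin n, (specRad W - specRad (delSub W {s})) / specRad W = 1) ∧
    (∑ s : Fin n, (specRad W - specRad (delSub W {s})) / specRad W) = (n : ℝ) := by
  haveI : NeZero n := ⟨by omega⟩
  set P : ℝ := ∏ i, w i with hPdef
  have hP : 0 < P := Finset.prod_pos fun i _ => hw i
  set r : ℝ := P ^ ((1 : ℝ) / (n : ℝ)) with hrdef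
  have hr0 : 0 < r := Real.rpow_pos_of_pos hP _
  have hrn : r ^ n = P := by
    rw [hrdef, ← Real.rpow_natCast (P ^ ((1 : ℝ) / (n : ℝ))) n, ← Real.rpow_mul hP.le,
      one_div_mul_cancel (by exact_mod_cast (by omega : n ≠ 0)), Real.rpow_one]
  have hone : ((1 : Fin n) : ℕ) = 1 := by
    rw [Fin.val_one']; exact Nat.mod_eq_of_lt (by omega)
  have hedge : ∀ i j : Fin n, ((j : ℕ) = ((i : ℕ) + 1) % n) ↔ j = i + 1 := by
    intro i j; rw [Fin.ext_iff, Fin.add_def, hone]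
  -- Part 1 : the spectral radius of W
  have hA : ∀ i j : Fin n, (W.map Complex.ofReal) i j
      = if j = i + 1 then (w i : ℂ) else 0 := by
    intro i j
    simp only [Matrix.map_apply, hWdef, hedge, apply_ite Complex.ofReal, Complex.ofReal_zero]
  have hmv : ∀ (v : Fin n → ℂ) (i : Fin n),
      (W.map Complex.ofReal).mulVec v i = (w i : ℂ) * v (i + 1) := by
    intro v i
    simp only [Matrix.mulVec, dotProduct, hA, ite_mul, zero_mul]
    rw [Finset.sum_ite_eq' Finset.univ (i + 1) (fun j => (w i : ℂ) * v j),
      if_pos (Finset.mem_univ _)]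
  -- every root of the charpoly has absolute value r
  have habs : ∀ μ : ℂ, (Matrix.charpoly (W.map Complex.ofReal)).IsRoot μ →
      ‖μ‖ = r := by
    intro μ hμ
    obtain ⟨v, hv0, hveq⟩ := (aux_charpoly_isRoot_iff _ μ).mp hμ
    have hv : ∀ i : Fin n, (w i : ℂ) * v (i + 1) = μ * v i := by
      intro i
      rw [← hmv v i, hveq]
      simp
    have hμn : μ ^ n = (P : ℂ) := by
      have key : ∀ k : ℕ, ∀ i : Fin n,
          μ ^ k * v i = (∏ j ∈ Finset.range k, (w (i + (j : Fin n)) : ℂ))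
            * v (i + (k : Fin n)) := by
        intro k
        induction k with
        | zero => intro i; simp
        | succ k ih =>
          intro i
          have hc : ∀ j : ℕ, i + ((j + 1 : ℕ) : Fin n) = (i + 1) + (j : Fin n) := by
            intro j; push_cast; ring
          calc μ ^ (k + 1) * v i = μ ^ k * (μ * v i) := by ring
            _ = μ ^ k * ((w i : ℂ) * v (i + 1)) := by rw [hv i]
            _ = (w i : ℂ) * (μ ^ k * v (i + 1)) := by ring
            _ = (w i : ℂ) * ((∏ j ∈ Finset.range k, (w ((i + 1) + (j : Fin n)) : ℂ))
                  * v ((i + 1) + (k : Fin n))) := by rw [ih]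
            _ = (∏ j ∈ Finset.range (k + 1), (w (i + (j : Fin n)) : ℂ))
                  * v (i + ((k + 1 : ℕ) : Fin n)) := by
                rw [Finset.prod_range_succ']
                simp only [Nat.cast_zero, add_zero, hc]
                ring
      have hprod : ∀ i : Fin n, (∏ j ∈ Finset.range n, (w (i + (j : Fin n)) : ℂ))
          = (P : ℂ) := by
        intro i
        rw [hPdef]
        push_cast
        rw [← Fin.prod_univ_eq_prod_range (fun j : ℕ => ((w (i + (j : Fin n)) : ℝ) : ℂ)) n]
        simp only [Fin.cast_val_eq_self]
        exact Fintype.prod_equiv (Equiv.addLeft i) _ _ (fun t => rfl)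
      obtain ⟨i, hi⟩ := Function.ne_iff.mp hv0
      have h := key n i
      rw [hprod i, Fin.natCast_self, add_zero] at h
      exact mul_right_cancel₀ hi h
    have habsn : ‖μ‖ ^ n = P := by
      rw [← norm_pow, hμn, Complex.norm_of_nonneg hP.le]
    calc ‖μ‖ = (‖μ‖ ^ n) ^ ((1 : ℝ) / (n : ℝ)) := by
          rw [← Real.rpow_natCast (‖μ‖) n, ← Real.rpow_mul (norm_nonneg μ),
            mul_one_div, div_self (by exact_mod_cast (by omega : n ≠ 0)), Real.rpow_one]
      _ = r := by rw [habsn, hrdef]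
  have hrootW : ∃ μ : ℂ, (Matrix.charpoly (W.map Complex.ofReal)).IsRoot μ :=
    aux_charpoly_has_root _
  have hsetW : {x : ℝ | ∃ μ : ℂ, (Matrix.charpoly (W.map Complex.ofReal)).IsRoot μ ∧
      x = ‖μ‖} = {r} := by
    ext x
    simp only [Set.mem_setOf_eq, Set.mem_singleton_iff]
    constructor
    · rintro ⟨μ, hμ, rfl⟩
      exact habs μ hμ
    · rintro rfl
      obtain ⟨μ, hμ⟩ := hrootW
      exact ⟨μ, hμ, (habs μ hμ).symm⟩
  have hrad : specRad W = r := by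
    rw [specRad, hsetW, csSup_singleton]
  -- Part 2 : deleting one vertex kills the spectral radius
  have hdel : ∀ s : Fin n, specRad (delSub W {s}) = 0 := by
    intro s
    set B := ((delSub W {s}).map Complex.ofReal) with hB
    have hBdef : ∀ (i j : {i : Fin n // i ∉ ({s} : Finset (Fin n))}),
        B i j = if (j : Fin n) = (i : Fin n) + 1 then (w i : ℂ) else 0 := by
      intro i j
      simp only [hB, Matrix.map_apply, delSub, Matrix.submatrix_apply, hWdef, hedge,
        apply_ite Complex.ofReal, Complex.ofReal_zero]
    have hzero : ∀ μ : ℂ, B.charpoly.IsRoot μ → μ = 0 := by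
      intro μ hμ
      obtain ⟨v, hv0, hv⟩ := (aux_charpoly_isRoot_iff B μ).mp hμ
      by_contra hμ0
      have hmv1 : ∀ i : {i : Fin n // i ∉ ({s} : Finset (Fin n))},
          (i : Fin n) + 1 = s → μ * v i = 0 := by
        intro i his
        have : B.mulVec v i = 0 := by
          rw [show B.mulVec v i = ∑ j, B i j * v j from rfl]
          apply Finset.sum_eq_zero
          intro j _
          rw [hBdef i j, if_neg, zero_mul]
          intro hj
          exact j.2 (by simp [hj, his])
        have h2 := congrFun hv i
        simp only [Pi.smul_apply, smul_eq_mul] at h2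
        rw [this] at h2
        exact h2.symm
      have hmv2 : ∀ (i : {i : Fin n // i ∉ ({s} : Finset (Fin n))})
          (h : (i : Fin n) + 1 ≠ s),
          μ * v i = (w i : ℂ) * v ⟨(i : Fin n) + 1, by simpa using h⟩ := by
        intro i h
        have : B.mulVec v i = (w i : ℂ) * v ⟨(i : Fin n) + 1, by simpa using h⟩ := by
          rw [show B.mulVec v i = ∑ j, B i j * v j from rfl]
          rw [Finset.sum_eq_single (⟨(i : Fin n) + 1, by simpa using h⟩ :
            {i : Fin n // i ∉ ({s} : Finset (Fin n))})]
          · rw [hBdef]; simp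
          · intro j _ hj
            rw [hBdef i j, if_neg, zero_mul]
            intro hj2
            exact hj (Subtype.ext hj2)
          · intro habs; exact absurd (Finset.mem_univ _) habs
        have h2 := congrFun hv i
        simp only [Pi.smul_apply, smul_eq_mul] at h2
        rw [this] at h2
        exact h2.symm
      have main : ∀ k : ℕ, ∀ i : {i : Fin n // i ∉ ({s} : Finset (Fin n))},
          (i : Fin n) + (k : Fin n) + 1 = s → v i = 0 := by
        intro k
        induction k with
        | zero =>
          intro i hi
          simp only [Nat.cast_zero, add_zero] at hi
          exact (mul_eq_zero.mp (hmv1 i hi)).resolve_left hμ0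
        | succ k ih =>
          intro i hi
          by_cases his : (i : Fin n) + 1 = s
          · exact (mul_eq_zero.mp (hmv1 i his)).resolve_left hμ0
          · have hisub : ((i : Fin n) + 1) ∉ ({s} : Finset (Fin n)) := by simpa using his
            have hstep : ((i : Fin n) + 1) + (k : Fin n) + 1 = s := by
              have hcast : ((i : Fin n) + 1) + (k : Fin n) + 1
                  = (i : Fin n) + (((k + 1 : ℕ)) : Fin n) + 1 := by push_cast; ring
              rw [hcast]; exact hi
            have hz := ih ⟨(i : Fin n) + 1, hisub⟩ hstep
            have h3 := hmv2 i his
            rw [hz, mul_zero] at h3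
            exact (mul_eq_zero.mp h3).resolve_left hμ0
      have hvz : v = 0 := by
        funext i
        refine main ((s - (i : Fin n) - 1 : Fin n) : ℕ) i ?_
        rw [Fin.cast_val_eq_self]
        ring
      exact hv0 hvz
    haveI : Nonempty {i : Fin n // i ∉ ({s} : Finset (Fin n))} := by
      refine ⟨⟨s + 1, ?_⟩⟩
      simp only [Finset.mem_singleton]
      intro h
      have := congrArg (fun x : Fin n => (x - s : Fin n)) h
      simp at this
      omega
    obtain ⟨μ₀, hμ₀⟩ := aux_charpoly_has_root B
    have hset : {x : ℝ | ∃ μ : ℂ, B.charpoly.IsRoot μ ∧ x = ‖μ‖} = {0} := by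
      ext x
      simp only [Set.mem_setOf_eq, Set.mem_singleton_iff]
      constructor
      · rintro ⟨μ, hμ, rfl⟩
        rw [hzero μ hμ, norm_zero]
      · rintro rfl
        exact ⟨μ₀, hμ₀, by rw [hzero μ₀ hμ₀, norm_zero]⟩
    rw [specRad, ← hB, hset, csSup_singleton]
  -- Parts 3 and 4
  have hinf : ∀ s : Fin n, (specRad W - specRad (delSub W {s})) / specRad W = 1 := by
    intro s
    rw [hdel s, sub_zero, div_self (by rw [hrad]; exact hr0.ne')]
  refine ⟨hrad, hdel, hinf, ?_⟩
  simp only [hinf]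
  simp
end

section
/- Let a, b, c, d be nonnegative real numbers, not all zero in the sense that a + d + Δ > 0 where Δ = √((a − d)² + 4bc), and let W be the 2×2 matrix with rows (a, b) and (c, d). Then the spectral cyclicality of W equals 𝐒 = 2Δ/(a + d + Δ); equivalently, when Δ > 0, 𝐒 = 2/(1 + (a + d)/Δ). -/
open Matrix BigOperators

open Polynomial in
private lemma specRad_card_one {m : Type*} [Fintype m] [DecidableEq m] (e : m ≃ Fin 1)
    (W : Matrix m m ℝ) : specRad W = |W (e.symm 0) (e.symm 0)| := by
  unfold specRad
  have hcp : (W.map Complex.ofReal).charpoly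
      = X - C (Complex.ofReal (W (e.symm 0) (e.symm 0))) := by
    rw [← Matrix.charpoly_reindex e, Matrix.charpoly, Matrix.det_fin_one]
    simp [Matrix.charmatrix_apply_eq]
  have hset : {r : ℝ | ∃ μ : ℂ, (Matrix.charpoly (W.map Complex.ofReal)).IsRoot μ ∧
      r = ‖μ‖} = {|W (e.symm 0) (e.symm 0)|} := by
    ext r
    simp only [hcp, Set.mem_setOf_eq, Set.mem_singleton_iff, IsRoot.def, eval_sub, eval_X,
      eval_C, sub_eq_zero]
    constructor
    · rintro ⟨μ, rfl, rfl⟩; rw [Complex.norm_real, Real.norm_eq_abs]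
    · rintro rfl; exact ⟨_, rfl, by rw [Complex.norm_real, Real.norm_eq_abs]⟩
  rw [hset, csSup_singleton]

open Polynomial in
private lemma specRad_two (a b c d Δ : ℝ) (ha : 0 ≤ a) (hd : 0 ≤ d)
    (hΔ : Δ = Real.sqrt ((a - d) ^ 2 + 4 * b * c)) (hbc : 0 ≤ 4 * b * c) :
    specRad !![a, b; c, d] = (a + d + Δ) / 2 := by
  unfold specRad
  have hΔ0 : 0 ≤ Δ := hΔ ▸ Real.sqrt_nonneg _
  have hΔsq : Δ ^ 2 = (a - d) ^ 2 + 4 * b * c := by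
    rw [hΔ]; exact Real.sq_sqrt (by positivity)
  set μ₁ : ℝ := (a + d + Δ) / 2 with hμ₁
  set μ₂ : ℝ := (a + d - Δ) / 2 with hμ₂
  have hcp : ((!![a, b; c, d]).map Complex.ofReal).charpoly
      = (X - C (μ₁ : ℂ)) * (X - C (μ₂ : ℂ)) := by
    rw [Matrix.charpoly, Matrix.det_fin_two]
    have h1 : (μ₁ : ℂ) + μ₂ = (a : ℂ) + d := by
      push_cast [hμ₁, hμ₂]; ring
    have h2 : (μ₁ : ℂ) * μ₂ = (a : ℂ) * d - b * c := by
      have : μ₁ * μ₂ = a * d - b * c := by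
        rw [hμ₁, hμ₂]; nlinarith [hΔsq]
      calc (μ₁ : ℂ) * μ₂ = ((μ₁ * μ₂ : ℝ) : ℂ) := by push_cast; ring
        _ = _ := by rw [this]; push_cast; ring
    simp only [Matrix.charmatrix_apply_eq,
      Matrix.charmatrix_apply_ne _ _ _ (by decide : (0:Fin 2) ≠ 1),
      Matrix.charmatrix_apply_ne _ _ _ (by decide : (1:Fin 2) ≠ 0), Matrix.map_apply,
      Matrix.cons_val', Matrix.cons_val_zero, Matrix.cons_val_one, Matrix.head_cons,
      Matrix.empty_val', Matrix.cons_val_fin_one, Matrix.head_fin_const]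
    rw [show (!![a,b;c,d] 0 0) = a from rfl, show (!![a,b;c,d] 1 1) = d from rfl,
      show (!![a,b;c,d] 0 1) = b from rfl, show (!![a,b;c,d] 1 0) = c from rfl,
      show ((X - C ((a:ℝ):ℂ)) * (X - C ((d:ℝ):ℂ)) - -C ((b:ℝ):ℂ) * -C ((c:ℝ):ℂ))
        = X ^ 2 - C ((a:ℂ) + d) * X + C ((a:ℂ)*d - b*c) from by
          simp only [C_add, C_sub, C_mul]; ring,
      ← h1, ← h2]
    simp only [C_add, C_mul]
    ring
  have hset : {r : ℝ | ∃ μ : ℂ, (Matrix.charpoly ((!![a, b; c, d]).map Complex.ofReal)).IsRoot μ ∧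
      r = ‖μ‖} = {|μ₁|, |μ₂|} := by
    ext r
    simp only [hcp, Set.mem_setOf_eq, Set.mem_insert_iff, Set.mem_singleton_iff, IsRoot.def,
      eval_mul, eval_sub, eval_X, eval_C, mul_eq_zero, sub_eq_zero]
    constructor
    · rintro ⟨μ, (rfl | rfl), rfl⟩
      · left; rw [Complex.norm_real, Real.norm_eq_abs]
      · right; rw [Complex.norm_real, Real.norm_eq_abs]
    · rintro (rfl | rfl)
      · exact ⟨_, Or.inl rfl, by rw [Complex.norm_real, Real.norm_eq_abs]⟩
      · exact ⟨_, Or.inr rfl, by rw [Complex.norm_real, Real.norm_eq_abs]⟩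
  rw [hset, csSup_pair]
  have h1 : |μ₁| = μ₁ := abs_of_nonneg (by rw [hμ₁]; positivity)
  have h2 : |μ₂| ≤ μ₁ := by
    rw [abs_le]; constructor <;> rw [hμ₁, hμ₂] <;> [nlinarith; nlinarith]
  rw [h1, sup_eq_left.mpr (h1 ▸ h2)]

private def eDel0 : {i : Fin 2 // i ∉ ({0} : Finset (Fin 2))} ≃ Fin 1 where
  toFun := fun _ => 0
  invFun := fun _ => ⟨1, by decide⟩
  left_inv := by decide
  right_inv := by decide

private def eDel1 : {i : Fin 2 // i ∉ ({1} : Finset (Fin 2))} ≃ Fin 1 where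
  toFun := fun _ => 0
  invFun := fun _ => ⟨0, by decide⟩
  left_inv := by decide
  right_inv := by decide

/-- The spectral cyclicality of the nonnegative `2 × 2` matrix with rows `(a, b)` and `(c, d)`
equals `2Δ / (a + d + Δ)` where `Δ = √((a - d)² + 4bc)`; equivalently, when `Δ > 0`, it equals
`2 / (1 + (a + d) / Δ)`. -/

theorem cyclicality_two_by_two (a b c d : ℝ) (ha : 0 ≤ a) (hb : 0 ≤ b) (hc : 0 ≤ c)
    (hd : 0 ≤ d) (Δ : ℝ) (hΔ : Δ = Real.sqrt ((a - d) ^ 2 + 4 * b * c))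
    (hpos : 0 < a + d + Δ) :
    (∑ s : Fin 2,
        (specRad !![a, b; c, d] - specRad (delSub !![a, b; c, d] {s})) /
          specRad !![a, b; c, d]) = 2 * Δ / (a + d + Δ) ∧
    (0 < Δ →
      (∑ s : Fin 2,
          (specRad !![a, b; c, d] - specRad (delSub !![a, b; c, d] {s})) /
            specRad !![a, b; c, d]) = 2 / (1 + (a + d) / Δ)) := by
  have hbc : 0 ≤ 4 * b * c := by positivity
  have hΔ0 : 0 ≤ Δ := hΔ ▸ Real.sqrt_nonneg _
  have hρ : specRad !![a, b; c, d] = (a + d + Δ) / 2 := specRad_two a b c d Δ ha hd hΔ hbc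
  have h0 : specRad (delSub !![a, b; c, d] {0}) = d := by
    rw [specRad_card_one eDel0, show delSub !![a, b; c, d] {0} (eDel0.symm 0) (eDel0.symm 0)
        = d from rfl, abs_of_nonneg hd]
  have h1 : specRad (delSub !![a, b; c, d] {1}) = a := by
    rw [specRad_card_one eDel1, show delSub !![a, b; c, d] {1} (eDel1.symm 0) (eDel1.symm 0)
        = a from rfl, abs_of_nonneg ha]
  have hsum : (∑ s : Fin 2,
      (specRad !![a, b; c, d] - specRad (delSub !![a, b; c, d] {s})) /
        specRad !![a, b; c, d]) = 2 * Δ / (a + d + Δ) := by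
    rw [Fin.sum_univ_two, h0, h1, hρ]
    have hne : a + d + Δ ≠ 0 := ne_of_gt hpos
    field_simp
    ring
  refine ⟨hsum, fun hΔpos => ?_⟩
  rw [hsum]
  have h1 : (0:ℝ) < 1 + (a + d) / Δ := by positivity
  rw [div_eq_div_iff (ne_of_gt hpos) (ne_of_gt h1)]
  field_simp
  ring
end
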